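/- Characterization of Choquet-type traces: if a map φ from positive semidefinite n×n complex matrices to [0,∞) is monotone (for the Loewner order), unitarily invariant, positively homogeneous, and additive on f(a)+g(a) for all monotone increasing nonnegative functions f, g on the spectrum of each positive semidefinite a, then there exists a monotone increasing α : {0,...,n} → [0,∞) with α(0)=0 such that φ(a) = Σ_{i=1}^{n-1} (λ_i(a) − λ_{i+1}(a))α(i) + λₙ(a)α(n) for every positive semidefinite a. -/

import Mathlib

open Matrix BigOperators Finset
open scoped ComplexOrder

/-- The `i`-th largest eigenvalue (0-indexed) of a Hermitian matrix. -/
noncomputable def eigDesc {n : ℕ} (a : Matrix (Fin n) (Fin n) ℂ) (ha : a.IsHermitian) (i : Fin n) : ℝ :=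
  ha.eigenvalues (Tuple.sort ha.eigenvalues i.rev)

/-- Eigenvalues in decreasing order, extended by `0` beyond the size. `eigN a ha i = λ_{i+1}(a)`. -/
noncomputable def eigN {n : ℕ} (a : Matrix (Fin n) (Fin n) ℂ) (ha : a.IsHermitian) (i : ℕ) : ℝ :=
  if h : i < n then eigDesc a ha ⟨i, h⟩ else 0

/-- The non-linear trace of Choquet type:
`φ_α(a) = ∑_{i=1}^{n-1} (λ_i(a) - λ_{i+1}(a)) α(i) + λ_n(a) α(n)`. -/
noncomputable def choquetTrace {n : ℕ} (α : ℕ → ℝ) (a : Matrix (Fin n) (Fin n) ℂ)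
    (ha : a.IsHermitian) : ℝ :=
  ∑ i ∈ Finset.range n, (eigN a ha i - eigN a ha (i + 1)) * α (i + 1)

/-- Functional calculus of a Hermitian matrix `a` by a function `f : ℝ → ℝ` on its eigenvalues. -/
noncomputable def funCalc {n : ℕ} (f : ℝ → ℝ) (a : Matrix (Fin n) (Fin n) ℂ)
    (ha : a.IsHermitian) : Matrix (Fin n) (Fin n) ℂ :=
  (ha.eigenvectorUnitary : Matrix (Fin n) (Fin n) ℂ) *
    Matrix.diagonal (fun i => (f (ha.eigenvalues i) : ℂ)) *
    star (ha.eigenvectorUnitary : Matrix (Fin n) (Fin n) ℂ)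

/-- The absolute value `|a| = (a^* a)^{1/2}` of a matrix. -/
noncomputable def matAbs {n : ℕ} (a : Matrix (Fin n) (Fin n) ℂ) : Matrix (Fin n) (Fin n) ℂ :=
  ((Matrix.posSemidef_conjTranspose_mul_self a).1.eigenvectorUnitary : Matrix (Fin n) (Fin n) ℂ) *
    Matrix.diagonal ((↑) ∘ (fun x => √x) ∘ (Matrix.posSemidef_conjTranspose_mul_self a).1.eigenvalues) *
    (star (Matrix.posSemidef_conjTranspose_mul_self a).1.eigenvectorUnitary : Matrix (Fin n) (Fin n) ℂ)

theorem matAbs_isHermitian {n : ℕ} (a : Matrix (Fin n) (Fin n) ℂ) : (matAbs a).IsHermitian := by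
  unfold matAbs
  rw [Matrix.star_eq_conjTranspose]
  exact Matrix.isHermitian_mul_mul_conjTranspose _
    (Matrix.isHermitian_diagonal_of_self_adjoint _ (by ext i; simp))

section helpers
variable {n : ℕ}

lemma eigN_nonneg {a : Matrix (Fin n) (Fin n) ℂ} (ha : a.PosSemidef) (i : ℕ) :
    0 ≤ eigN a ha.1 i := by
  unfold eigN
  split
  · exact ha.eigenvalues_nonneg _
  · exact le_refl 0

lemma eigDesc_anti {a : Matrix (Fin n) (Fin n) ℂ} (ha : a.IsHermitian) {i j : Fin n} (h : i ≤ j) :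
    eigDesc a ha j ≤ eigDesc a ha i :=
  Tuple.monotone_sort ha.eigenvalues (Fin.rev_le_rev.mpr h)

lemma eigN_anti {a : Matrix (Fin n) (Fin n) ℂ} (ha : a.PosSemidef) {i j : ℕ} (h : i ≤ j) :
    eigN a ha.1 j ≤ eigN a ha.1 i := by
  by_cases hj : j < n
  · have hi : i < n := lt_of_le_of_lt h hj
    rw [eigN, dif_pos hj, eigN, dif_pos hi]
    exact eigDesc_anti ha.1 (by exact h)
  · rw [eigN, dif_neg hj]
    exact eigN_nonneg ha i

lemma funCalc_zero (a : Matrix (Fin n) (Fin n) ℂ) (ha : a.IsHermitian) :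
    funCalc (fun _ => 0) a ha = 0 := by
  simp [funCalc]

lemma funCalc_add (f g : ℝ → ℝ) (a : Matrix (Fin n) (Fin n) ℂ) (ha : a.IsHermitian) :
    funCalc (fun x => f x + g x) a ha = funCalc f a ha + funCalc g a ha := by
  simp only [funCalc]
  have : (fun i => (((f (ha.eigenvalues i) + g (ha.eigenvalues i) : ℝ)) : ℂ))
      = (fun i => ((f (ha.eigenvalues i) : ℝ) : ℂ) + ((g (ha.eigenvalues i) : ℝ) : ℂ)) := by
    funext i; push_cast; rfl
  rw [this, ← Matrix.diagonal_add, mul_add, add_mul]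

lemma funCalc_smul (c : ℝ) (f : ℝ → ℝ) (a : Matrix (Fin n) (Fin n) ℂ) (ha : a.IsHermitian) :
    funCalc (fun x => c * f x) a ha = c • funCalc f a ha := by
  simp only [funCalc]
  have : (fun i => (((c * f (ha.eigenvalues i) : ℝ)) : ℂ))
      = c • (fun i => ((f (ha.eigenvalues i) : ℝ) : ℂ)) := by
    funext i; simp [Complex.real_smul]
  rw [this, Matrix.diagonal_smul, mul_smul_comm, smul_mul_assoc]

lemma funCalc_congr {f g : ℝ → ℝ} (a : Matrix (Fin n) (Fin n) ℂ) (ha : a.IsHermitian)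
    (h : ∀ i, f (ha.eigenvalues i) = g (ha.eigenvalues i)) : funCalc f a ha = funCalc g a ha := by
  simp only [funCalc]
  have : (fun i => ((f (ha.eigenvalues i) : ℝ) : ℂ)) = fun i => ((g (ha.eigenvalues i) : ℝ) : ℂ) :=
    funext fun i => by rw [h i]
  rw [this]

lemma funCalc_id (a : Matrix (Fin n) (Fin n) ℂ) (ha : a.IsHermitian) :
    funCalc (fun x => x) a ha = a := by
  conv_rhs => rw [ha.spectral_theorem]
  rfl

lemma funCalc_posSemidef {f : ℝ → ℝ} (a : Matrix (Fin n) (Fin n) ℂ) (ha : a.IsHermitian)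
    (hf : ∀ i, 0 ≤ f (ha.eigenvalues i)) : (funCalc f a ha).PosSemidef := by
  have hd : (Matrix.diagonal fun i => ((f (ha.eigenvalues i) : ℝ) : ℂ)).PosSemidef :=
    Matrix.posSemidef_diagonal_iff.mpr fun i => by exact_mod_cast hf i
  have := hd.mul_mul_conjTranspose_same (ha.eigenvectorUnitary : Matrix (Fin n) (Fin n) ℂ)
  simpa [funCalc, Matrix.star_eq_conjTranspose] using this

lemma permMatrix_star (σ : Equiv.Perm (Fin n)) :
    star (σ.toPEquiv.toMatrix : Matrix (Fin n) (Fin n) ℂ) = σ.symm.toPEquiv.toMatrix := by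
  ext i j
  simp only [Matrix.star_eq_conjTranspose, Matrix.conjTranspose_apply, PEquiv.toMatrix_apply,
    Equiv.toPEquiv_apply, Option.mem_def, Option.some.injEq]
  split_ifs with h1 h2 h2 <;>
    simp_all [Equiv.symm_apply_eq, Equiv.eq_symm_apply]

lemma permMatrix_mem (σ : Equiv.Perm (Fin n)) :
    (σ.toPEquiv.toMatrix : Matrix (Fin n) (Fin n) ℂ) ∈ Matrix.unitaryGroup (Fin n) ℂ := by
  rw [Matrix.mem_unitaryGroup_iff, permMatrix_star, ← PEquiv.toMatrix_trans,
    ← Equiv.toPEquiv_trans]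
  simp

lemma permMatrix_conj_diagonal (σ : Equiv.Perm (Fin n)) (d : Fin n → ℂ) :
    (σ.toPEquiv.toMatrix : Matrix (Fin n) (Fin n) ℂ) * Matrix.diagonal d *
      star (σ.toPEquiv.toMatrix : Matrix (Fin n) (Fin n) ℂ) = Matrix.diagonal (d ∘ σ) := by
  rw [permMatrix_star, PEquiv.toMatrix_toPEquiv_mul, PEquiv.mul_toMatrix_toPEquiv,
    Equiv.symm_symm, Matrix.submatrix_submatrix]
  simpa using Matrix.submatrix_diagonal d σ σ.injective

lemma ind_monotone (t : ℝ) : Monotone (fun x => if t ≤ x then (1:ℝ) else 0) := by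
  intro x y hxy
  by_cases h : t ≤ x
  · simp [h, le_trans h hxy]
  · dsimp only
    rw [if_neg h]
    split_ifs <;> norm_num

end helpers

/-- characterization of Choquet-type traces by monotony, unitary invariance,
positive homogeneity and monotonic increasing additivity on the spectrum. -/
theorem stmt5 (n : ℕ) (φ : Matrix (Fin n) (Fin n) ℂ → ℝ)
    (hpos : ∀ a : Matrix (Fin n) (Fin n) ℂ, a.PosSemidef → 0 ≤ φ a)
    (hmono : ∀ a b : Matrix (Fin n) (Fin n) ℂ,
      a.PosSemidef → b.PosSemidef → (b - a).PosSemidef → φ a ≤ φ b)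
    (hunit : ∀ a : Matrix (Fin n) (Fin n) ℂ, a.PosSemidef →
      ∀ u : Matrix.unitaryGroup (Fin n) ℂ,
        φ ((u : Matrix (Fin n) (Fin n) ℂ) * a * star (u : Matrix (Fin n) (Fin n) ℂ)) = φ a)
    (hhom : ∀ a : Matrix (Fin n) (Fin n) ℂ, a.PosSemidef →
      ∀ k : ℝ, 0 ≤ k → φ (k • a) = k * φ a)
    (hadd : ∀ (a : Matrix (Fin n) (Fin n) ℂ) (ha : a.PosSemidef) (f g : ℝ → ℝ),
      MonotoneOn f (Set.range ha.1.eigenvalues) → MonotoneOn g (Set.range ha.1.eigenvalues) →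
      (∀ i, 0 ≤ f (ha.1.eigenvalues i)) → (∀ i, 0 ≤ g (ha.1.eigenvalues i)) →
      φ (funCalc f a ha.1 + funCalc g a ha.1) = φ (funCalc f a ha.1) + φ (funCalc g a ha.1)) :
    ∃ α : ℕ → ℝ, α 0 = 0 ∧ (∀ i j : ℕ, i ≤ j → j ≤ n → α i ≤ α j) ∧
      ∀ (a : Matrix (Fin n) (Fin n) ℂ) (ha : a.PosSemidef), φ a = choquetTrace α a ha.1 := by
  classical
  have hproj : ∀ k : ℕ,
      (Matrix.diagonal fun j : Fin n => if (j:ℕ) < k then (1:ℂ) else 0).PosSemidef :=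
    fun k => Matrix.posSemidef_diagonal_iff.mpr fun j => by split_ifs <;> simp
  have hφ0 : φ 0 = 0 := by
    have h := hhom 0 Matrix.PosSemidef.zero 0 le_rfl
    simpa using h
  refine ⟨fun k => φ (Matrix.diagonal fun j : Fin n => if (j:ℕ) < k then (1:ℂ) else 0),
    ?_, ?_, ?_⟩
  · have h0 : (Matrix.diagonal fun j : Fin n => if (j:ℕ) < 0 then (1:ℂ) else 0) = 0 := by
      simp
    simp only [h0, hφ0]
  · intro i j hij _
    apply hmono _ _ (hproj i) (hproj j)
    rw [Matrix.diagonal_sub]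
    refine Matrix.posSemidef_diagonal_iff.mpr fun l => ?_
    by_cases h1 : (l:ℕ) < i
    · simp [h1, lt_of_lt_of_le h1 hij]
    · by_cases h2 : (l:ℕ) < j <;> simp [h1, h2]
  · intro a ha
    set m : ℕ → ℝ := fun i => eigN a ha.1 i with hm
    set g : Equiv.Perm (Fin n) := Tuple.sort ha.1.eigenvalues with hg
    have hm0 : ∀ i, 0 ≤ m i := fun i => eigN_nonneg ha i
    have hmanti : ∀ {i j : ℕ}, i ≤ j → m j ≤ m i := fun h => eigN_anti ha h
    have hmn : m n = 0 := by simp [hm, eigN]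
    have hmfin : ∀ j : Fin n, m (j:ℕ) = ha.1.eigenvalues (g j.rev) := by
      intro j
      simp only [hm, eigN, j.isLt, dif_pos, eigDesc, hg, Fin.eta]
    set χ : ℕ → ℝ → ℝ := fun i x => if m i ≤ x then (1:ℝ) else 0 with hχ
    set f : ℕ → ℝ → ℝ := fun i x => (m i - m (i+1)) * χ i x with hf
    have hχmono : ∀ i, Monotone (χ i) := fun i => ind_monotone (m i)
    have hcnn : ∀ i : ℕ, 0 ≤ m i - m (i+1) := fun i => sub_nonneg.mpr (hmanti (Nat.le_succ i))
    have hχnn : ∀ i x, 0 ≤ χ i x := by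
      intro i x; by_cases h : m i ≤ x <;> simp [hχ, h]
    have hfmono : ∀ i, Monotone (f i) := fun i => (hχmono i).const_mul (hcnn i)
    have hfnn : ∀ i x, 0 ≤ f i x := fun i x => mul_nonneg (hcnn i) (hχnn i x)
    set F : ℕ → ℝ → ℝ := fun k x => ∑ i ∈ Finset.range k, f i x with hF
    have hFmono : ∀ k, Monotone (F k) := fun k x y hxy =>
      Finset.sum_le_sum fun i _ => hfmono i hxy
    have hFnn : ∀ k x, 0 ≤ F k x := fun k x => Finset.sum_nonneg fun i _ => hfnn i x
    -- evaluation of the sum at eigenvalues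
    have hsum_eval : ∀ j : Fin n, ∑ i ∈ Finset.range n, f i (m (j:ℕ)) = m (j:ℕ) := by
      intro j
      have hterm : ∀ i ∈ Finset.range n,
          f i (m (j:ℕ)) = m (max i (j:ℕ)) - m (max (i+1) (j:ℕ)) := by
        intro i _
        rcases le_or_gt (j:ℕ) i with hji | hij
        · have h1 : m i ≤ m (j:ℕ) := hmanti hji
          simp [hf, hχ, h1, Nat.max_eq_left hji,
            Nat.max_eq_left (le_trans hji (Nat.le_succ i))]
        · have hj1 : i + 1 ≤ (j:ℕ) := hij
          rw [Nat.max_eq_right (le_of_lt hij), Nat.max_eq_right hj1, sub_self]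
          by_cases h1 : m i ≤ m (j:ℕ)
          · have he : m i = m (j:ℕ) := le_antisymm h1 (hmanti (le_of_lt hij))
            have he2 : m (i+1) = m i :=
              le_antisymm (hmanti (Nat.le_succ i)) (he ▸ hmanti hj1)
            simp [hf, hχ, h1, he2]
          · simp [hf, hχ, h1]
      rw [Finset.sum_congr rfl hterm,
        Finset.sum_range_sub' (fun i => m (max i (j:ℕ))) n]
      rw [Nat.max_eq_right (Nat.zero_le _), Nat.max_eq_left (le_of_lt j.isLt), hmn, sub_zero]
    -- funCalc of the full sum equals a
    have hFn : funCalc (F n) a ha.1 = a := by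
      conv_rhs => rw [← funCalc_id a ha.1]
      apply funCalc_congr
      intro j
      obtain ⟨j', hj'⟩ : ∃ j' : Fin n, ha.1.eigenvalues j = m ((j':Fin n):ℕ) :=
        ⟨(g.symm j).rev, by rw [hmfin]; simp [Fin.rev_rev]⟩
      rw [hj']
      exact hsum_eval j'
    -- induction step: additivity
    have hstep : ∀ k, φ (funCalc (F k) a ha.1) = ∑ i ∈ Finset.range k, φ (funCalc (f i) a ha.1) := by
      intro k
      induction k with
      | zero =>
          have : F 0 = fun _ => 0 := by funext x; simp [hF]
          rw [this, funCalc_zero, hφ0, Finset.sum_range_zero]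
      | succ k ih =>
          have h1 : funCalc (F (k+1)) a ha.1 = funCalc (F k) a ha.1 + funCalc (f k) a ha.1 := by
            have : F (k+1) = fun x => F k x + f k x := by
              funext x; simp [hF, Finset.sum_range_succ]
            rw [this, funCalc_add]
          rw [h1, hadd a ha (F k) (f k) ((hFmono k).monotoneOn _) ((hfmono k).monotoneOn _)
            (fun i => hFnn k _) (fun i => hfnn k _), ih, Finset.sum_range_succ]
    -- each term
    have hterm_phi : ∀ i ∈ Finset.range n, φ (funCalc (f i) a ha.1)
        = (m i - m (i+1)) * φ (Matrix.diagonal fun j : Fin n => if (j:ℕ) < i+1 then (1:ℂ) else 0) := by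
      intro i hi
      have hQpsd : (funCalc (χ i) a ha.1).PosSemidef :=
        funCalc_posSemidef a ha.1 (fun j => hχnn i _)
      have h1 : funCalc (f i) a ha.1 = (m i - m (i+1)) • funCalc (χ i) a ha.1 :=
        funCalc_smul _ _ a ha.1
      rw [h1, hhom _ hQpsd _ (hcnn i)]
      rcases eq_or_lt_of_le (hcnn i) with hc0 | hcpos
      · rw [← hc0, zero_mul, zero_mul]
      · congr 1
        have hlt : m (i+1) < m i := by linarith
        set d : Fin n → ℂ := fun j => ((if m i ≤ ha.1.eigenvalues j then (1:ℝ) else 0 : ℝ) : ℂ) with hd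
        have hdpsd : (Matrix.diagonal d).PosSemidef :=
          Matrix.posSemidef_diagonal_iff.mpr fun j => by
            by_cases h : m i ≤ ha.1.eigenvalues j <;> simp [hd, h]
        have h2 : φ (funCalc (χ i) a ha.1) = φ (Matrix.diagonal d) :=
          hunit (Matrix.diagonal d) hdpsd ha.1.eigenvectorUnitary
        rw [h2]
        set σ : Equiv.Perm (Fin n) := Fin.revPerm.trans g with hσ
        have hdσ : ∀ j : Fin n, d (σ j) = (if (j:ℕ) < i + 1 then (1:ℂ) else 0) := by
          intro j
          have hev : ha.1.eigenvalues (σ j) = m (j:ℕ) := by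
            rw [hmfin j]; rfl
          rcases Nat.lt_or_ge (j:ℕ) (i+1) with hji | hij
          · have hle : m i ≤ m (j:ℕ) := hmanti (Nat.lt_succ_iff.mp hji)
            simp [hd, hev, hle, hji]
          · have hle : m (j:ℕ) ≤ m (i+1) := hmanti hij
            have hnle : ¬ (m i ≤ m (j:ℕ)) := not_le.mpr (lt_of_le_of_lt hle hlt)
            simp [hd, hev, hnle, Nat.not_lt.mpr hij]
        have hc := permMatrix_conj_diagonal σ.symm
          (fun j : Fin n => if (j:ℕ) < i+1 then (1:ℂ) else 0)
        have he : ((fun j : Fin n => if (j:ℕ) < i+1 then (1:ℂ) else 0) ∘ ⇑σ.symm) = d := by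
          funext j
          have h3 := hdσ (σ.symm j)
          simp only [Function.comp_apply]
          rw [← h3, Equiv.apply_symm_apply]
        rw [he] at hc
        rw [← hc]
        exact hunit _ (hproj (i+1)) ⟨_, permMatrix_mem σ.symm⟩
    calc φ a = φ (funCalc (F n) a ha.1) := by rw [hFn]
      _ = ∑ i ∈ Finset.range n, φ (funCalc (f i) a ha.1) := hstep n
      _ = choquetTrace (fun k => φ (Matrix.diagonal fun j : Fin n => if (j:ℕ) < k then (1:ℂ) else 0)) a ha.1 := by
          rw [Finset.sum_congr rfl hterm_phi]; rfl
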